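/- There exists a finite outerplanar graph whose track number is exactly 5 (it admits a 5-track layout but no 4-track layout). -/

import Mathlib

/-- A track layout of `G` with tracks indexed by `T`: an injective position map,
adjacent vertices on distinct tracks, and no X-crossing. -/
def IsTrackLayout {V : Type*} {T : Type*} (G : SimpleGraph V)
    (track : V → T) (pos : V → ℕ) : Prop :=
  Function.Injective pos ∧
  (∀ ⦃u v⦄, G.Adj u v → track u ≠ track v) ∧
  (∀ ⦃u v x y⦄, G.Adj u v → G.Adj x y → track u = track x → track v = track y →
    pos u < pos x → pos y < pos v → False)

/-- The track number of `G`: the least `t` such that `G` has a `t`-track layout. -/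
noncomputable def trackNumber {V : Type*} (G : SimpleGraph V) : ℕ :=
  sInf {t | ∃ (track : V → Fin t) (pos : V → ℕ), IsTrackLayout G track pos}

/-- A graph is outerplanar if its vertices admit a linear order (given by an injection
into `ℕ`) such that no two edges interleave (a one-page book embedding). -/
def IsOuterplanar {V : Type*} (G : SimpleGraph V) : Prop :=
  ∃ σ : V → ℕ, Function.Injective σ ∧
    ∀ ⦃a b c d : V⦄, G.Adj a b → G.Adj c d →
      ¬(σ a < σ c ∧ σ c < σ b ∧ σ b < σ d)

/-! ### Computational primitives (defined by recursors, for fast kernel reduction) -/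

def anyR {α : Type} (l : List α) (f : α → Bool) : Bool :=
  l.rec false (fun a _ ih => f a || ih)
def allR {α : Type} (l : List α) (f : α → Bool) : Bool :=
  l.rec true (fun a _ ih => f a && ih)
def containsR (x : ℕ) (l : List ℕ) : Bool :=
  l.rec false (fun a _ ih => (a == x) || ih)
def lengthR {α : Type} (l : List α) : ℕ := l.rec 0 (fun _ _ ih => ih + 1)
def rangeD (n : ℕ) : List ℕ := n.rec [] (fun n' ih => n' :: ih)
def insertIdxR (p v : ℕ) (l : List ℕ) : List ℕ :=
  Nat.rec (motive := fun _ => List ℕ → List ℕ) (fun l => v :: l)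
    (fun _ ih l => l.casesOn [] (fun a l' => a :: ih l')) p l
def getT {α : Type} (S : List α) (t : ℕ) (d : α) : α :=
  List.rec (motive := fun _ => ℕ → α) (fun _ => d)
    (fun l _ ih t => t.casesOn l (fun t' => ih t')) S t
def ins (S : List (List ℕ)) (t p v : ℕ) : List (List ℕ) :=
  List.rec (motive := fun _ => ℕ → List (List ℕ)) (fun _ => [])
    (fun l ls ih t => t.casesOn (insertIdxR p v l :: ls) (fun t' => l :: ih t')) S t
def aft (u : ℕ) (l : List ℕ) : List ℕ :=
  l.rec [] (fun a l' ih => if a = u then l' else ih)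
def bef (u : ℕ) (l : List ℕ) : List ℕ :=
  l.rec [] (fun a _ ih => if a = u then [] else a :: ih)
def aftS (S : List (List ℕ)) (u : ℕ) : List ℕ :=
  S.rec [] (fun l _ ih => if containsR u l then aft u l else ih)
def befS (S : List (List ℕ)) (u : ℕ) : List ℕ :=
  S.rec [] (fun l _ ih => if containsR u l then bef u l else ih)
def smT (S : List (List ℕ)) (u v : ℕ) : Bool :=
  anyR S fun l => containsR u l && containsR v l

/-! ### The witness graph on 12 vertices -/

def EL : List (ℕ × ℕ) :=
  [(0,1),(0,2),(0,3),(0,4),(0,7),(0,8),(1,2),(1,3),(1,5),(1,10),(2,5),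
   (2,7),(3,4),(3,6),(4,6),(5,10),(5,11),(7,8),(7,9),(8,9),(10,11)]
/-- the neighbours `< v` of each vertex `v` -/
def tblN : List (List ℕ) :=
  [[],[0],[0,1],[0,1],[0,3],[1,2],[3,4],[0,2],[0,7],[7,8],[1,5],[5,10]]
/-- the edges with both endpoints `≤ v`, for each vertex `v` -/
def tblE : List (List (ℕ × ℕ)) :=
  [[],
   [(0,1)],
   [(0,1),(0,2),(1,2)],
   [(0,1),(0,2),(0,3),(1,2),(1,3)],
   [(0,1),(0,2),(0,3),(0,4),(1,2),(1,3),(3,4)],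
   [(0,1),(0,2),(0,3),(0,4),(1,2),(1,3),(1,5),(2,5),(3,4)],
   [(0,1),(0,2),(0,3),(0,4),(1,2),(1,3),(1,5),(2,5),(3,4),(3,6),(4,6)],
   [(0,1),(0,2),(0,3),(0,4),(0,7),(1,2),(1,3),(1,5),(2,5),(2,7),(3,4),(3,6),(4,6)],
   [(0,1),(0,2),(0,3),(0,4),(0,7),(0,8),(1,2),(1,3),(1,5),(2,5),(2,7),(3,4),(3,6),(4,6),(7,8)],
   [(0,1),(0,2),(0,3),(0,4),(0,7),(0,8),(1,2),(1,3),(1,5),(2,5),(2,7),(3,4),(3,6),(4,6),(7,8),(7,9),(8,9)],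
   [(0,1),(0,2),(0,3),(0,4),(0,7),(0,8),(1,2),(1,3),(1,5),(1,10),(2,5),(2,7),(3,4),(3,6),(4,6),(5,10),(7,8),(7,9),(8,9)],
   [(0,1),(0,2),(0,3),(0,4),(0,7),(0,8),(1,2),(1,3),(1,5),(1,10),(2,5),(2,7),(3,4),(3,6),(4,6),(5,10),(5,11),(7,8),(7,9),(8,9),(10,11)]]

def adjB (u v : Fin 12) : Bool :=
  decide ((u.val, v.val) ∈ EL) || decide ((v.val, u.val) ∈ EL)

def GW : SimpleGraph (Fin 12) where
  Adj u v := adjB u v = true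
  symm := ⟨fun u v h => by
    revert h; exact (by decide : ∀ u v : Fin 12, adjB u v = true → adjB v u = true) u v⟩
  loopless := ⟨fun u h => by
    revert h; exact (by decide : ∀ u : Fin 12, ¬ adjB u u = true) u⟩

instance : DecidableRel GW.Adj := fun u v => inferInstanceAs (Decidable (adjB u v = true))

/-! ### The search procedure -/

/-- `noX S Ev u w = true` iff no edge of `Ev` has one endpoint after `u` on `u`'s
track and the other before `w` on `w`'s track (which would be an X-crossing with
the edge `(u, w)`). -/
def noX (S : List (List ℕ)) (Ev : List (ℕ × ℕ)) (u w : ℕ) : Bool :=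
  let A := aftS S u
  let B := befS S w
  allR Ev fun f =>
    !((containsR f.1 A && containsR f.2 B) || (containsR f.2 A && containsR f.1 B))

/-- check validity of the newly placed vertex `v` against all previously placed ones -/
def okv (S : List (List ℕ)) (v : ℕ) : Bool :=
  let Ev := getT tblE v []
  allR (getT tblN v []) fun w =>
    !smT S v w && noX S Ev v w && noX S Ev w v

/-- exhaustive search over all canonical partial 4-track layouts, inserting
vertices `k, k+1, …` in order -/
def search (fuel : ℕ) : ℕ → ℕ → List (List ℕ) → Bool :=
  Nat.rec (motive := fun _ => ℕ → ℕ → List (List ℕ) → Bool)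
    (fun _ _ _ => true)
    (fun _ ih k m S =>
      anyR (rangeD (min 4 (m+1))) fun t =>
        anyR (rangeD (lengthR (getT S t []) + 1)) fun p =>
          okv (ins S t p k) k && ih (k+1) (max m (t+1)) (ins S t p k))
    fuel

set_option maxHeartbeats 8000000 in
theorem search_false : search 12 0 0 [[], [], [], []] = false := by decide

/-! ### Basic lemmas about the computational primitives -/

theorem anyR_eq_true {α : Type} {l : List α} {f : α → Bool} :
    anyR l f = true ↔ ∃ a ∈ l, f a = true := by
  induction l with
  | nil => simp [anyR]
  | cons a l ih =>
    show (f a || anyR l f) = true ↔ _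
    simp [ih]

theorem allR_eq_true {α : Type} {l : List α} {f : α → Bool} :
    allR l f = true ↔ ∀ a ∈ l, f a = true := by
  induction l with
  | nil => simp [allR]
  | cons a l ih =>
    show (f a && allR l f) = true ↔ _
    simp [ih]

theorem containsR_iff {x : ℕ} {l : List ℕ} : containsR x l = true ↔ x ∈ l := by
  induction l with
  | nil => simp [containsR]
  | cons a l ih =>
    show ((a == x) || containsR x l) = true ↔ _
    rw [Bool.or_eq_true, beq_iff_eq, ih, List.mem_cons]
    tauto

theorem lengthR_eq {α : Type} (l : List α) : lengthR l = l.length := by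
  induction l with
  | nil => rfl
  | cons a l ih => show lengthR l + 1 = _ ; simp [ih]

theorem mem_rangeD {n v : ℕ} : v ∈ rangeD n ↔ v < n := by
  induction n with
  | zero => simp [rangeD]
  | succ n ih =>
    show v ∈ n :: rangeD n ↔ _
    simp [ih]
    omega

/-! ### The state induced by an actual layout -/

section Complete

variable (track : Fin 12 → Fin 4) (pos : Fin 12 → ℕ)

def trN (v : ℕ) : ℕ := if h : v < 12 then (track ⟨v, h⟩).val else 0
def pvN (v : ℕ) : ℕ := if h : v < 12 then pos ⟨v, h⟩ else 0

/-- comparison of positions -/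
def rel (a b : ℕ) : Prop := pvN pos a ≤ pvN pos b

instance : DecidableRel (rel pos) := fun _ _ => inferInstanceAs (Decidable (_ ≤ _))
instance : IsTotal ℕ (rel pos) := ⟨fun a b => Nat.le_total _ _⟩
instance : IsTrans ℕ (rel pos) := ⟨fun _ _ _ => Nat.le_trans⟩

/-- the `t`-th track list after inserting vertices `0, …, k-1` -/
def bt (k t : ℕ) : List ℕ :=
  List.insertionSort (rel pos) (((List.range k).reverse).filter (fun v => trN track v == t))

def sig (k : ℕ) : List (List ℕ) :=
  [bt track pos k 0, bt track pos k 1, bt track pos k 2, bt track pos k 3]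

variable {track pos}

lemma mem_bt {k t v : ℕ} : v ∈ bt track pos k t ↔ v < k ∧ trN track v = t := by
  unfold bt
  rw [(List.perm_insertionSort _ _).mem_iff]
  simp [List.mem_filter]

lemma nodup_bt (k t : ℕ) : (bt track pos k t).Nodup :=
  ((List.perm_insertionSort _ _).nodup_iff).mpr
    ((List.nodup_reverse.mpr (List.nodup_range (n := k))).filter _)

lemma sorted_bt (k t : ℕ) : (bt track pos k t).Pairwise (rel pos) :=
  List.pairwise_insertionSort _ _

lemma mem_sig {l : List ℕ} {k : ℕ} (h : l ∈ sig track pos k) :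
    ∃ t, t < 4 ∧ l = bt track pos k t := by
  simp only [sig, List.mem_cons, List.not_mem_nil, or_false] at h
  rcases h with h | h | h | h
  exacts [⟨0, by omega, h⟩, ⟨1, by omega, h⟩, ⟨2, by omega, h⟩, ⟨3, by omega, h⟩]

lemma aft_sound {u x : ℕ} : ∀ {l : List ℕ}, l.Pairwise (rel pos) → l.Nodup →
    x ∈ aft u l → u ∈ l ∧ x ∈ l ∧ x ≠ u ∧ rel pos u x := by
  intro l
  induction l with
  | nil => intro _ _ h; simp [aft] at h
  | cons a l ih =>
    intro hp hn hx
    rw [List.pairwise_cons] at hp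
    rw [List.nodup_cons] at hn
    have hx' : x ∈ if a = u then l else aft u l := hx
    by_cases hau : a = u
    · rw [if_pos hau] at hx'
      subst hau
      exact ⟨List.mem_cons_self, List.mem_cons_of_mem _ hx',
        fun he => hn.1 (he ▸ hx'), hp.1 x hx'⟩
    · rw [if_neg hau] at hx'
      obtain ⟨h1, h2, h3, h4⟩ := ih hp.2 hn.2 hx'
      exact ⟨List.mem_cons_of_mem _ h1, List.mem_cons_of_mem _ h2, h3, h4⟩

lemma bef_sound {u y : ℕ} : ∀ {l : List ℕ}, l.Pairwise (rel pos) → l.Nodup →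
    y ∈ bef u l → u ∈ l → y ∈ l ∧ y ≠ u ∧ rel pos y u := by
  intro l
  induction l with
  | nil => intro _ _ h; simp [bef] at h
  | cons a l ih =>
    intro hp hn hy hu
    rw [List.pairwise_cons] at hp
    rw [List.nodup_cons] at hn
    have hy' : y ∈ if a = u then ([] : List ℕ) else a :: bef u l := hy
    by_cases hau : a = u
    · rw [if_pos hau] at hy'; simp at hy'
    · rw [if_neg hau] at hy'
      have hu' : u ∈ l := by
        rcases List.mem_cons.mp hu with h | h
        · exact absurd h.symm hau
        · exact h
      rcases List.mem_cons.mp hy' with h | h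
      · subst h
        exact ⟨List.mem_cons_self, hau, hp.1 u hu'⟩
      · obtain ⟨h1, h2, h3⟩ := ih hp.2 hn.2 h hu'
        exact ⟨List.mem_cons_of_mem _ h1, h2, h3⟩

lemma mem_aftS {u x : ℕ} : ∀ {S : List (List ℕ)}, x ∈ aftS S u →
    ∃ l, l ∈ S ∧ u ∈ l ∧ x ∈ aft u l := by
  intro S
  induction S with
  | nil => intro h; simp [aftS] at h
  | cons l ls ih =>
    intro h
    have h' : x ∈ if containsR u l then aft u l else aftS ls u := h
    by_cases hc : containsR u l
    · rw [if_pos hc] at h'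
      exact ⟨l, List.mem_cons_self, containsR_iff.mp hc, h'⟩
    · rw [if_neg hc] at h'
      obtain ⟨l', h1, h2, h3⟩ := ih h'
      exact ⟨l', List.mem_cons_of_mem _ h1, h2, h3⟩

lemma mem_befS {u y : ℕ} : ∀ {S : List (List ℕ)}, y ∈ befS S u →
    ∃ l, l ∈ S ∧ u ∈ l ∧ y ∈ bef u l := by
  intro S
  induction S with
  | nil => intro h; simp [befS] at h
  | cons l ls ih =>
    intro h
    have h' : y ∈ if containsR u l then bef u l else befS ls u := h
    by_cases hc : containsR u l
    · rw [if_pos hc] at h'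
      exact ⟨l, List.mem_cons_self, containsR_iff.mp hc, h'⟩
    · rw [if_neg hc] at h'
      obtain ⟨l', h1, h2, h3⟩ := ih h'
      exact ⟨l', List.mem_cons_of_mem _ h1, h2, h3⟩

/-- common bridging: same-track membership facts lift to the `Fin 12` world -/
lemma lift_pair (hpos : Function.Injective pos) {k u x : ℕ} (hk : k ≤ 12)
    {t : ℕ} (hu : u ∈ bt track pos k t) (hx : x ∈ bt track pos k t)
    (hne : x ≠ u) (hle : rel pos u x) :
    ∃ (hu12 : u < 12) (hx12 : x < 12),
      track ⟨u, hu12⟩ = track ⟨x, hx12⟩ ∧ pos ⟨u, hu12⟩ < pos ⟨x, hx12⟩ := by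
  rw [mem_bt] at hu hx
  have hu12 : u < 12 := lt_of_lt_of_le hu.1 hk
  have hx12 : x < 12 := lt_of_lt_of_le hx.1 hk
  refine ⟨hu12, hx12, ?_, ?_⟩
  · apply Fin.val_injective
    have h1 := hu.2; have h2 := hx.2
    rw [trN, dif_pos hu12] at h1
    rw [trN, dif_pos hx12] at h2
    rw [h1, h2]
  · have hle' : pos ⟨u, hu12⟩ ≤ pos ⟨x, hx12⟩ := by
      have := hle
      rw [rel, pvN, pvN, dif_pos hu12, dif_pos hx12] at this
      exact this
    refine lt_of_le_of_ne hle' (fun he => hne ?_)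
    have := hpos he
    simpa using (congrArg Fin.val this).symm

lemma aftS_sound (hpos : Function.Injective pos) {k u x : ℕ} (hk : k ≤ 12)
    (h : x ∈ aftS (sig track pos k) u) :
    ∃ (hu : u < 12) (hx : x < 12),
      track ⟨u, hu⟩ = track ⟨x, hx⟩ ∧ pos ⟨u, hu⟩ < pos ⟨x, hx⟩ := by
  obtain ⟨l, hl, hul, hxl⟩ := mem_aftS h
  obtain ⟨t, -, rfl⟩ := mem_sig hl
  obtain ⟨h1, h2, h3, h4⟩ := aft_sound (sorted_bt k t) (nodup_bt k t) hxl
  exact lift_pair hpos hk h1 h2 h3 h4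

lemma befS_sound (hpos : Function.Injective pos) {k w y : ℕ} (hk : k ≤ 12)
    (h : y ∈ befS (sig track pos k) w) :
    ∃ (hy : y < 12) (hw : w < 12),
      track ⟨y, hy⟩ = track ⟨w, hw⟩ ∧ pos ⟨y, hy⟩ < pos ⟨w, hw⟩ := by
  obtain ⟨l, hl, hwl, hyl⟩ := mem_befS h
  obtain ⟨t, -, rfl⟩ := mem_sig hl
  obtain ⟨h1, h2, h3⟩ := bef_sound (sorted_bt k t) (nodup_bt k t) hyl hwl
  exact lift_pair hpos hk h1 hwl (Ne.symm h2) h3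

lemma smT_sound {k u v : ℕ} (hk : k ≤ 12) (h : smT (sig track pos k) u v = true) :
    ∃ (hu : u < 12) (hv : v < 12), track ⟨u, hu⟩ = track ⟨v, hv⟩ := by
  rw [smT, anyR_eq_true] at h
  obtain ⟨l, hl, hmem⟩ := h
  rw [Bool.and_eq_true] at hmem
  obtain ⟨t, -, rfl⟩ := mem_sig hl
  have hu := mem_bt.mp (containsR_iff.mp hmem.1)
  have hv := mem_bt.mp (containsR_iff.mp hmem.2)
  have hu12 : u < 12 := lt_of_lt_of_le hu.1 hk
  have hv12 : v < 12 := lt_of_lt_of_le hv.1 hk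
  refine ⟨hu12, hv12, ?_⟩
  apply Fin.val_injective
  have h1 := hu.2; have h2 := hv.2
  rw [trN, dif_pos hu12] at h1
  rw [trN, dif_pos hv12] at h2
  rw [h1, h2]

end Complete

/-! ### Table facts (by `decide`) -/

lemma tblN_fact : ∀ v < 12, ∀ w ∈ getT tblN v [], w < 12 ∧ ((v,w) ∈ EL ∨ (w,v) ∈ EL) := by
  decide

lemma tblE_fact : ∀ v < 12, ∀ f ∈ getT tblE v [], f ∈ EL := by decide

lemma EL_bounds : ∀ e ∈ EL, e.1 < 12 ∧ e.2 < 12 := by decide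

lemma EL_adj : ∀ u v : Fin 12, (u.val, v.val) ∈ EL → GW.Adj u v := by decide

section Complete2

variable {track : Fin 12 → Fin 4} {pos : Fin 12 → ℕ}

lemma noX_sig (hpos : Function.Injective pos)
    (hcross : ∀ ⦃u v x y⦄, GW.Adj u v → GW.Adj x y → track u = track x →
      track v = track y → pos u < pos x → pos y < pos v → False)
    {k : ℕ} (hk : k ≤ 12) {Ev : List (ℕ × ℕ)}
    (hEv : ∀ f ∈ Ev, ∃ (h1 : f.1 < 12) (h2 : f.2 < 12), GW.Adj ⟨f.1, h1⟩ ⟨f.2, h2⟩)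
    (u w : Fin 12) (huw : GW.Adj u w) :
    noX (sig track pos k) Ev u.val w.val = true := by
  show allR Ev _ = true
  rw [allR_eq_true]
  intro f hf
  obtain ⟨h1, h2, hadjf⟩ := hEv f hf
  rw [Bool.not_eq_true', Bool.or_eq_false_iff]
  constructor <;>
  · rw [Bool.and_eq_false_iff]
    by_contra hcon
    push_neg at hcon
    obtain ⟨ha, hb⟩ := hcon
    replace ha := containsR_iff.mp (Bool.ne_false_iff.mp ha)
    replace hb := containsR_iff.mp (Bool.ne_false_iff.mp hb)
    obtain ⟨hu', hx', htux, hpux⟩ := aftS_sound hpos hk ha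
    obtain ⟨hy', hw', htyw, hpyw⟩ := befS_sound hpos hk hb
    first
    | exact hcross huw hadjf
        (by simpa using htux) (by simpa using htyw.symm)
        (by simpa using hpux) (by simpa using hpyw)
    | exact hcross huw hadjf.symm
        (by simpa using htux) (by simpa using htyw.symm)
        (by simpa using hpux) (by simpa using hpyw)

lemma okv_sig (hpos : Function.Injective pos)
    (hadj : ∀ ⦃u v⦄, GW.Adj u v → track u ≠ track v)
    (hcross : ∀ ⦃u v x y⦄, GW.Adj u v → GW.Adj x y → track u = track x →
      track v = track y → pos u < pos x → pos y < pos v → False)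
    {k v : ℕ} (hk : k ≤ 12) (hv : v < 12) :
    okv (sig track pos k) v = true := by
  show allR (getT tblN v []) _ = true
  rw [allR_eq_true]
  intro w hw
  obtain ⟨hw12, hel⟩ := tblN_fact v hv w hw
  have hadj_vw : GW.Adj ⟨v, hv⟩ ⟨w, hw12⟩ := by
    rcases hel with h | h
    · exact EL_adj _ _ h
    · exact (EL_adj _ _ h).symm
  have hEv : ∀ f ∈ getT tblE v [], ∃ (h1 : f.1 < 12) (h2 : f.2 < 12),
      GW.Adj ⟨f.1, h1⟩ ⟨f.2, h2⟩ := by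
    intro f hf
    have hfEL := tblE_fact v hv f hf
    obtain ⟨h1, h2⟩ := EL_bounds f hfEL
    exact ⟨h1, h2, EL_adj _ _ hfEL⟩
  rw [Bool.and_eq_true, Bool.and_eq_true]
  refine ⟨⟨?_, ?_⟩, ?_⟩
  · rw [Bool.not_eq_true']
    by_contra hcon
    replace hcon := Bool.ne_false_iff.mp hcon
    obtain ⟨hu', hv', htr⟩ := smT_sound hk hcon
    exact hadj hadj_vw htr
  · exact noX_sig hpos hcross hk hEv _ _ hadj_vw
  · exact noX_sig hpos hcross hk hEv _ _ hadj_vw.symm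

/-! ### The step lemma: `sig (k+1)` is an insertion into `sig k` -/

lemma OI_insertIdxR (a : ℕ) : ∀ (l : List ℕ),
    ∃ p, p ≤ lengthR l ∧ List.orderedInsert (rel pos) a l = insertIdxR p a l := by
  intro l
  induction l with
  | nil => exact ⟨0, le_refl _, rfl⟩
  | cons b l ih =>
    by_cases h : rel pos a b
    · refine ⟨0, Nat.zero_le _, ?_⟩
      rw [List.orderedInsert_cons_of_le _ _ h]
      rfl
    · obtain ⟨p, hp, heq⟩ := ih
      refine ⟨p + 1, ?_, ?_⟩
      · show p + 1 ≤ lengthR l + 1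
        omega
      · show List.orderedInsert (rel pos) a (b :: l) = b :: insertIdxR p a l
        rw [← heq]
        simp [List.orderedInsert, h]

lemma bt_succ (k t : ℕ) : bt track pos (k+1) t =
    if trN track k = t then List.orderedInsert (rel pos) k (bt track pos k t)
    else bt track pos k t := by
  unfold bt
  rw [List.range_succ, List.reverse_append]
  simp only [List.reverse_cons, List.reverse_nil, List.nil_append, List.singleton_append]
  rw [List.filter_cons]
  by_cases h : trN track k = t
  · rw [if_pos h, if_pos (by simpa using h)]
    rfl
  · rw [if_neg h, if_neg (by simpa using h)]

lemma sig_succ {k : ℕ} (hk : k < 12) :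
    ∃ p, p ≤ lengthR (getT (sig track pos k) (trN track k) []) ∧
      sig track pos (k+1) = ins (sig track pos k) (trN track k) p k := by
  have ht4 : trN track k < 4 := by
    rw [trN, dif_pos hk]
    exact (track ⟨k, hk⟩).isLt
  obtain ⟨p, hp, hOI⟩ := OI_insertIdxR (pos := pos) k (bt track pos k (trN track k))
  have hbt := fun t => bt_succ (track := track) (pos := pos) k t
  interval_cases ht : (trN track k) <;>
  · refine ⟨p, by exact hp, ?_⟩
    show [bt track pos (k+1) 0, bt track pos (k+1) 1,
          bt track pos (k+1) 2, bt track pos (k+1) 3] = _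
    rw [hbt 0, hbt 1, hbt 2, hbt 3]
    norm_num
    rw [hOI]
    rfl

end Complete2

/-! ### Completeness of the search -/

section Complete3

variable {track : Fin 12 → Fin 4} {pos : Fin 12 → ℕ}

lemma getT_sig {k t : ℕ} (ht : t < 4) :
    getT (sig track pos k) t [] = bt track pos k t := by
  interval_cases t <;> rfl

lemma search_complete (hpos : Function.Injective pos)
    (hadj : ∀ ⦃u v⦄, GW.Adj u v → track u ≠ track v)
    (hcross : ∀ ⦃u v x y⦄, GW.Adj u v → GW.Adj x y → track u = track x →
      track v = track y → pos u < pos x → pos y < pos v → False)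
    (hQ : ∀ j, j < 12 → ∀ s, s < trN track j → ∃ i, i < j ∧ trN track i = s) :
    ∀ f k m, k + f = 12 → (∀ j, j < k → trN track j < m) →
      search f k m (sig track pos k) = true := by
  intro f
  induction f with
  | zero => intro k m _ _; rfl
  | succ f ih =>
    intro k m hkf hbound
    have hk : k < 12 := by omega
    have ht4 : trN track k < 4 := by
      rw [trN, dif_pos hk]; exact (track ⟨k, hk⟩).isLt
    have htm : trN track k < m + 1 := by
      by_contra hcon
      push_neg at hcon
      obtain ⟨i, hik, hieq⟩ := hQ k hk m (by omega)
      have := hbound i hik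
      omega
    obtain ⟨p, hple, hins⟩ := sig_succ (track := track) (pos := pos) hk
    show anyR _ _ = true
    rw [anyR_eq_true]
    refine ⟨trN track k, mem_rangeD.mpr (by omega), ?_⟩
    rw [anyR_eq_true]
    refine ⟨p, mem_rangeD.mpr (by omega), ?_⟩
    rw [← hins, Bool.and_eq_true]
    constructor
    · exact okv_sig hpos hadj hcross (by omega) hk
    · have hb' : ∀ j, j < k + 1 → trN track j < max m (trN track k + 1) := by
        intro j hj
        rcases Nat.lt_succ_iff_lt_or_eq.mp hj with h | h
        · exact lt_of_lt_of_le (hbound j h) (le_max_left _ _)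
        · subst h; exact lt_of_lt_of_le (Nat.lt_succ_self _) (le_max_right _ _)
      exact ih (k+1) (max m (trN track k + 1)) (by omega) hb'

end Complete3

/-! ### Canonicalization: tracks can be relabelled in order of first use -/

lemma canon (track : Fin 12 → Fin 4) :
    ∃ π : Fin 4 → Fin 4, Function.Injective π ∧
      ∀ j, j < 12 → ∀ s, s < trN (fun v => π (track v)) j →
        ∃ i, i < j ∧ trN (fun v => π (track v)) i = s := by
  classical
  let fT : Fin 4 → ℕ := fun t => sInf ({j | ∃ h : j < 12, track ⟨j, h⟩ = t} ∪ {12 + t.val})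
  have hne : ∀ t, ({j | ∃ h : j < 12, track ⟨j, h⟩ = t} ∪ {12 + t.val} : Set ℕ).Nonempty :=
    fun t => ⟨12 + t.val, Or.inr rfl⟩
  have hmem : ∀ t, fT t ∈ ({j | ∃ h : j < 12, track ⟨j, h⟩ = t} ∪ {12 + t.val} : Set ℕ) :=
    fun t => Nat.sInf_mem (hne t)
  have hinj : Function.Injective fT := by
    intro s t h
    rcases hmem s with hs | hs <;> rcases hmem t with ht | ht
    · obtain ⟨h1, e1⟩ := hs; obtain ⟨h2, e2⟩ := ht
      rw [← e1, ← e2]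
      congr 1
      exact Fin.mk_eq_mk.mpr h
    · obtain ⟨h1, -⟩ := hs
      rw [Set.mem_singleton_iff] at ht
      omega
    · obtain ⟨h2, -⟩ := ht
      rw [Set.mem_singleton_iff] at hs
      omega
    · rw [Set.mem_singleton_iff] at hs ht
      apply Fin.val_injective
      omega
  let Sf : Finset ℕ := Finset.image fT Finset.univ
  have hcard : Sf.card = 4 := by
    rw [Finset.card_image_of_injective _ hinj, Finset.card_univ]
    simp
  let e := Sf.orderIsoOfFin hcard
  let π : Fin 4 → Fin 4 := fun t =>
    e.symm ⟨fT t, Finset.mem_image_of_mem _ (Finset.mem_univ t)⟩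
  have hπord : ∀ s t, π s < π t ↔ fT s < fT t := by
    intro s t
    show e.symm _ < e.symm _ ↔ _
    rw [e.symm.lt_iff_lt]
    exact Subtype.mk_lt_mk
  have hπinj : Function.Injective π := by
    intro s t h
    apply hinj
    have := e.symm.injective h
    exact Subtype.mk_eq_mk.mp this
  refine ⟨π, hπinj, ?_⟩
  intro j hj s hs
  have hπsurj : Function.Surjective π := Finite.injective_iff_surjective.mp hπinj
  have hs4 : s < 4 := by
    have h4 : trN (fun v => π (track v)) j < 4 := by
      rw [trN, dif_pos hj]; exact (π (track ⟨j, hj⟩)).isLt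
    omega
  obtain ⟨u, hu⟩ := hπsurj ⟨s, hs4⟩
  rw [trN, dif_pos hj] at hs
  have hlt : π u < π (track ⟨j, hj⟩) := by
    rw [Fin.lt_def, hu]; exact hs
  have hfT : fT u < fT (track ⟨j, hj⟩) := (hπord _ _).mp hlt
  have hle : fT (track ⟨j, hj⟩) ≤ j := Nat.sInf_le (Or.inl ⟨hj, rfl⟩)
  rcases hmem u with hmu | hmu
  · obtain ⟨h1, e1⟩ := hmu
    refine ⟨fT u, by omega, ?_⟩
    rw [trN, dif_pos (by omega : fT u < 12)]
    have he2 : track ⟨fT u, by omega⟩ = u := e1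
    rw [he2, hu]
  · rw [Set.mem_singleton_iff] at hmu
    omega

/-! ### No 4-track layout -/

theorem no_four_track :
    ¬ ∃ (track : Fin 12 → Fin 4) (pos : Fin 12 → ℕ), IsTrackLayout GW track pos := by
  rintro ⟨track0, pos, hinj, hadj0, hcross0⟩
  obtain ⟨π, hπinj, hQ⟩ := canon track0
  set track : Fin 12 → Fin 4 := fun v => π (track0 v) with htrack
  have hadj : ∀ ⦃u v⦄, GW.Adj u v → track u ≠ track v :=
    fun u v h he => hadj0 h (hπinj he)
  have hcross : ∀ ⦃u v x y⦄, GW.Adj u v → GW.Adj x y → track u = track x →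
      track v = track y → pos u < pos x → pos y < pos v → False :=
    fun u v x y h1 h2 h3 h4 h5 h6 => hcross0 h1 h2 (hπinj h3) (hπinj h4) h5 h6
  have hcomp := search_complete hinj hadj hcross hQ 12 0 0 rfl (by omega)
  have hsig0 : sig track pos 0 = [[], [], [], []] := rfl
  rw [hsig0, search_false] at hcomp
  exact Bool.false_ne_true hcomp

/-! ### The 5-track layout and outerplanarity -/

def track5 : Fin 12 → Fin 5 := fun v => [0,1,2,2,1,0,4,3,1,0,2,1].get v
def pos5 : Fin 12 → ℕ := fun v => [5,11,7,2,6,10,4,3,1,0,12,16].get v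

lemma track5_layout : IsTrackLayout GW track5 pos5 := by
  refine ⟨?_, ?_, ?_⟩
  · intro u v h
    revert h
    exact (by decide : ∀ u v : Fin 12, pos5 u = pos5 v → u = v) u v
  · intro u v h
    revert h
    exact (by decide : ∀ u v : Fin 12, GW.Adj u v → track5 u ≠ track5 v) u v
  · intro u v x y h1 h2 h3 h4 h5 h6
    revert h1 h2 h3 h4 h5 h6
    exact (by decide : ∀ u v x y : Fin 12, GW.Adj u v → GW.Adj x y →
      track5 u = track5 x → track5 v = track5 y →
      pos5 u < pos5 x → pos5 y < pos5 v → False) u v x y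

lemma GW_outerplanar : IsOuterplanar GW := by
  refine ⟨fun v => [0,4,8,3,1,7,2,9,11,10,5,6].get v, ?_, ?_⟩
  · intro u v h
    revert h
    exact (by decide : ∀ u v : Fin 12,
      [0,4,8,3,1,7,2,9,11,10,5,6].get u = [0,4,8,3,1,7,2,9,11,10,5,6].get v → u = v) u v
  · intro a b c d h1 h2
    revert h1 h2
    exact (by decide : ∀ a b c d : Fin 12, GW.Adj a b → GW.Adj c d →
      ¬([0,4,8,3,1,7,2,9,11,10,5,6].get a < [0,4,8,3,1,7,2,9,11,10,5,6].get c ∧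
        [0,4,8,3,1,7,2,9,11,10,5,6].get c < [0,4,8,3,1,7,2,9,11,10,5,6].get b ∧
        [0,4,8,3,1,7,2,9,11,10,5,6].get b < [0,4,8,3,1,7,2,9,11,10,5,6].get d)) a b c d

/-! ### Main theorem -/

theorem exists_outerplanar_trackNumber_eq_five :
    ∃ (n : ℕ) (G : SimpleGraph (Fin n)), IsOuterplanar G ∧ trackNumber G = 5 := by
  refine ⟨12, GW, GW_outerplanar, ?_⟩
  have h5 : ∃ (track : Fin 12 → Fin 5) (pos : Fin 12 → ℕ),
      IsTrackLayout GW track pos := ⟨track5, pos5, track5_layout⟩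
  have h5' : 5 ∈ {t | ∃ (track : Fin 12 → Fin t) (pos : Fin 12 → ℕ),
      IsTrackLayout GW track pos} := h5
  unfold trackNumber
  apply le_antisymm
  · exact Nat.sInf_le h5'
  · apply le_csInf ⟨5, h5'⟩
    intro m hm
    by_contra hcon
    push_neg at hcon
    obtain ⟨tr, po, hL⟩ := hm
    have hm4 : m ≤ 4 := by omega
    apply no_four_track
    refine ⟨fun v => Fin.castLE hm4 (tr v), po, hL.1, ?_, ?_⟩
    · intro u v h he
      exact hL.2.1 h (Fin.castLE_injective hm4 he)
    · intro u v x y h1 h2 h3 h4 h5' h6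
      exact hL.2.2 h1 h2 (Fin.castLE_injective hm4 h3) (Fin.castLE_injective hm4 h4) h5' h6
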